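/- Let v ∈ {±1}^n have at most ℓ sign changes (i.e., at most ℓ indices i ∈ [n-1] with v_{i+1} ≠ v_i). Then the Haar wavelet transform Hv of v has at most ℓ·log₂(n) + 1 nonzero entries, where n = 2^m and H is the n×n orthonormal Haar wavelet basis matrix. -/

import Mathlib

open Finset
open scoped Classical

/-- Entry of the orthonormal Haar wavelet matrix on `ℝ^(2^m)`.
Row `0` is the father wavelet; for `r ≥ 1`, writing `r = 2^i + j` with `0 ≤ j < 2^i`,
row `r` is the wavelet `ψ_{i,j}` (row `1` is the mother wavelet). -/
noncomputable def haarEntry (m r x : ℕ) : ℝ :=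
  if r = 0 then (2 : ℝ) ^ (-(m : ℝ) / 2)
  else
    let i := Nat.log 2 r
    let j := r - 2 ^ i
    if 2 ^ (m - i) * j ≤ x ∧ x < 2 ^ (m - i) * j + 2 ^ (m - i - 1) then
      (2 : ℝ) ^ (-((m : ℝ) - (i : ℝ)) / 2)
    else if 2 ^ (m - i) * j + 2 ^ (m - i - 1) ≤ x ∧ x < 2 ^ (m - i) * (j + 1) then
      -((2 : ℝ) ^ (-((m : ℝ) - (i : ℝ)) / 2))
    else 0

/-- The number of sign changes of `v` on `{0, ..., n-1}`. -/
noncomputable def signChanges (n : ℕ) (v : ℕ → ℝ) : ℕ :=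
  ((Finset.range (n - 1)).filter (fun i => v (i + 1) ≠ v i)).card

lemma haarEntry_eq (m r x i j : ℕ) (hr : r ≠ 0) (hi : i = Nat.log 2 r) (hj : j = r - 2 ^ i) :
    haarEntry m r x =
      (if 2 ^ (m - i) * j ≤ x ∧ x < 2 ^ (m - i) * j + 2 ^ (m - i - 1) then
        (2 : ℝ) ^ (-((m : ℝ) - (i : ℝ)) / 2)
      else if 2 ^ (m - i) * j + 2 ^ (m - i - 1) ≤ x ∧ x < 2 ^ (m - i) * (j + 1) then
        -((2 : ℝ) ^ (-((m : ℝ) - (i : ℝ)) / 2))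
      else 0) := by
  subst hi hj
  simp only [haarEntry, if_neg hr]

lemma haar_interval_le (m r : ℕ) (hr : r ≠ 0) (hrm : r < 2 ^ m) :
    2 ^ (m - Nat.log 2 r) * (r - 2 ^ Nat.log 2 r + 1) ≤ 2 ^ m := by
  have hile : 2 ^ Nat.log 2 r ≤ r := Nat.pow_log_le_self 2 hr
  have hrlt : r < 2 ^ (Nat.log 2 r + 1) := Nat.lt_pow_succ_log_self (by norm_num) r
  have him : Nat.log 2 r < m := Nat.log_lt_of_lt_pow hr hrm
  have hjlt : r - 2 ^ Nat.log 2 r + 1 ≤ 2 ^ Nat.log 2 r := by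
    rw [pow_succ] at hrlt; omega
  calc 2 ^ (m - Nat.log 2 r) * (r - 2 ^ Nat.log 2 r + 1)
      ≤ 2 ^ (m - Nat.log 2 r) * 2 ^ Nat.log 2 r := Nat.mul_le_mul_left _ hjlt
    _ = 2 ^ m := by rw [← pow_add]; congr 1; omega

lemma haar_sum_zero (m r : ℕ) (v : ℕ → ℝ) (hr : r ≠ 0) (hrm : r < 2 ^ m)
    (hc : ∀ x, 2 ^ (m - Nat.log 2 r) * (r - 2 ^ Nat.log 2 r) ≤ x →
      x + 1 < 2 ^ (m - Nat.log 2 r) * (r - 2 ^ Nat.log 2 r + 1) → v (x + 1) = v x) :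
    ∑ x ∈ Finset.range (2 ^ m), haarEntry m r x * v x = 0 := by
  have him : Nat.log 2 r < m := Nat.log_lt_of_lt_pow hr hrm
  set i := Nat.log 2 r with hi
  set j := r - 2 ^ i with hj
  set w : ℝ := (2 : ℝ) ^ (-((m : ℝ) - (i : ℝ)) / 2) with hw
  set a := 2 ^ (m - i) * j with ha
  set L := 2 ^ (m - i - 1) with hL
  have h2L : 2 ^ (m - i) = 2 * L := by
    rw [hL, ← pow_succ']; congr 1; omega
  have hA2 : 2 ^ (m - i) * (j + 1) = a + 2 * L := by
    rw [Nat.mul_succ, ← ha, h2L]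
  have hbound : a + 2 * L ≤ 2 ^ m := by
    rw [← hA2]; exact haar_interval_le m r hr hrm
  -- constancy of v on the interval
  have hconst : ∀ x, a ≤ x → x < a + 2 * L → v x = v a := by
    intro x hax hxlt
    obtain ⟨d, rfl⟩ : ∃ d, x = a + d := ⟨x - a, by omega⟩
    clear hax
    induction d with
    | zero => rfl
    | succ d ih =>
        have h1 : a + d < a + 2 * L := by omega
        have hstep := hc (a + d) (by omega) (by rw [hA2]; omega)
        show v ((a + d) + 1) = v a
        rw [hstep, ih h1]
  -- reduce sum to the interval
  have hzero_out : ∀ x ∈ Finset.range (2 ^ m), x ∉ Finset.Ico a (a + 2 * L) →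
      haarEntry m r x * v x = 0 := by
    intro x _ hx
    rw [Finset.mem_Ico] at hx
    rw [haarEntry_eq m r x i j hr hi hj, ← ha, ← hL, hA2]
    rw [if_neg (by omega), if_neg (by omega), zero_mul]
  have hsub : Finset.Ico a (a + 2 * L) ⊆ Finset.range (2 ^ m) := by
    intro x hx
    rw [Finset.mem_Ico] at hx
    rw [Finset.mem_range]
    omega
  rw [← Finset.sum_subset hsub hzero_out]
  have hsplit := Finset.sum_Ico_consecutive (fun x => haarEntry m r x * v x)
    (show a ≤ a + L by omega) (show a + L ≤ a + 2 * L by omega)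
  rw [← hsplit]
  have h1 : ∀ x ∈ Finset.Ico a (a + L), haarEntry m r x * v x = w * v a := by
    intro x hx
    rw [Finset.mem_Ico] at hx
    rw [haarEntry_eq m r x i j hr hi hj, ← ha, ← hL, ← hw, if_pos (by omega),
      hconst x (by omega) (by omega)]
  have h2 : ∀ x ∈ Finset.Ico (a + L) (a + 2 * L), haarEntry m r x * v x = -(w * v a) := by
    intro x hx
    rw [Finset.mem_Ico] at hx
    rw [haarEntry_eq m r x i j hr hi hj, ← ha, ← hL, ← hw, hA2, if_neg (by omega),
      if_pos (by omega), hconst x (by omega) (by omega), neg_mul]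
  rw [Finset.sum_congr rfl h1, Finset.sum_congr rfl h2, Finset.sum_const, Finset.sum_const,
    Nat.card_Ico, Nat.card_Ico]
  have : a + L - a = a + 2 * L - (a + L) := by omega
  rw [this]
  simp

/-- If `v ∈ {±1}^n` has at most `ℓ` sign changes, where `n = 2^m`, then the Haar transform
`Hv` has at most `ℓ·log₂ n + 1 = ℓ·m + 1` nonzero entries. -/
theorem haar_transform_sparsity (m ℓ : ℕ) (v : ℕ → ℝ)
    (hv : ∀ i < 2 ^ m, v i = 1 ∨ v i = -1)
    (hsc : signChanges (2 ^ m) v ≤ ℓ) :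
    ((Finset.range (2 ^ m)).filter
        (fun r => (∑ x ∈ Finset.range (2 ^ m), haarEntry m r x * v x) ≠ 0)).card
      ≤ ℓ * m + 1 := by
  classical
  set S := (Finset.range (2 ^ m)).filter
    (fun r => (∑ x ∈ Finset.range (2 ^ m), haarEntry m r x * v x) ≠ 0) with hS
  set SC := (Finset.range (2 ^ m - 1)).filter (fun x => v (x + 1) ≠ v x) with hSCdef
  have hSCcard : SC.card ≤ ℓ := hsc
  -- key existence of a sign change inside the support interval
  have key : ∀ r ∈ S.erase 0, ∃ x, x ∈ SC ∧
      2 ^ (m - Nat.log 2 r) * (r - 2 ^ Nat.log 2 r) ≤ x ∧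
      x + 1 < 2 ^ (m - Nat.log 2 r) * (r - 2 ^ Nat.log 2 r + 1) := by
    intro r hr
    obtain ⟨hr0, hrS⟩ := Finset.mem_erase.mp hr
    have hrn : r < 2 ^ m := Finset.mem_range.mp (Finset.mem_filter.mp hrS).1
    have hsum := (Finset.mem_filter.mp hrS).2
    by_contra hcon
    push_neg at hcon
    apply hsum
    apply haar_sum_zero m r v hr0 hrn
    intro x hx1 hx2
    by_contra hne
    have hxr : x < 2 ^ m - 1 := by
      have := haar_interval_le m r hr0 hrn
      omega
    have := hcon x (Finset.mem_filter.mpr ⟨Finset.mem_range.mpr hxr, hne⟩) hx1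
    omega
  -- the injection
  set g : ℕ → ℕ × ℕ := fun r =>
    (Nat.log 2 r, if h : ∃ x, x ∈ SC ∧
      2 ^ (m - Nat.log 2 r) * (r - 2 ^ Nat.log 2 r) ≤ x ∧
      x + 1 < 2 ^ (m - Nat.log 2 r) * (r - 2 ^ Nat.log 2 r + 1) then h.choose else 0) with hg
  have hgval : ∀ r ∈ S.erase 0, ∃ s : ℕ, g r = (Nat.log 2 r, s) ∧ s ∈ SC ∧
      2 ^ (m - Nat.log 2 r) * (r - 2 ^ Nat.log 2 r) ≤ s ∧
      s + 1 < 2 ^ (m - Nat.log 2 r) * (r - 2 ^ Nat.log 2 r + 1) := by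
    intro r hr
    refine ⟨(key r hr).choose, ?_, (key r hr).choose_spec⟩
    simp only [hg, dif_pos (key r hr)]
  have hmaps : ∀ r ∈ S.erase 0, g r ∈ Finset.range m ×ˢ SC := by
    intro r hr
    obtain ⟨s, hgr, hmem, _, _⟩ := hgval r hr
    have hr0 := (Finset.mem_erase.mp hr).1
    have hrn : r < 2 ^ m := Finset.mem_range.mp
      (Finset.mem_filter.mp (Finset.mem_erase.mp hr).2).1
    rw [hgr, Finset.mem_product]
    exact ⟨Finset.mem_range.mpr (Nat.log_lt_of_lt_pow hr0 hrn), hmem⟩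
  have hinj : Set.InjOn g (S.erase 0) := by
    intro r1 h1 r2 h2 heq
    obtain ⟨s1, hg1, _, hlo1, hhi1⟩ := hgval r1 h1
    obtain ⟨s2, hg2, _, hlo2, hhi2⟩ := hgval r2 h2
    rw [hg1, hg2, Prod.mk.injEq] at heq
    obtain ⟨hie, hse⟩ := heq
    have hr01 := (Finset.mem_erase.mp h1).1
    have hr02 := (Finset.mem_erase.mp h2).1
    rw [← hie] at hlo2 hhi2
    rw [← hse] at hlo2 hhi2
    set i := Nat.log 2 r1 with hi1
    have hp : 0 < 2 ^ (m - i) := Nat.pow_pos (by norm_num)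
    have hd1 : s1 / 2 ^ (m - i) = r1 - 2 ^ i :=
      Nat.div_eq_of_lt_le (by rw [Nat.mul_comm] at hlo1; omega)
        (by rw [Nat.mul_comm (r1 - 2 ^ i + 1)] ; omega)
    have hd2 : s1 / 2 ^ (m - i) = r2 - 2 ^ i :=
      Nat.div_eq_of_lt_le (by rw [Nat.mul_comm] at hlo2; omega)
        (by rw [Nat.mul_comm (r2 - 2 ^ i + 1)] ; omega)
    have hle1 : 2 ^ i ≤ r1 := Nat.pow_log_le_self 2 hr01
    have hle2 : 2 ^ i ≤ r2 := by
      have := Nat.pow_log_le_self 2 hr02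
      rwa [← hie] at this
    omega
  have hcard1 : (S.erase 0).card ≤ m * SC.card := by
    have := Finset.card_le_card_of_injOn g hmaps hinj
    simpa [Finset.card_product] using this
  have hSsub : S ⊆ insert 0 (S.erase 0) := by
    intro r hr
    by_cases h : r = 0
    · subst h; exact Finset.mem_insert_self _ _
    · exact Finset.mem_insert_of_mem (Finset.mem_erase.mpr ⟨h, hr⟩)
  have := Finset.card_le_card hSsub
  have hins := Finset.card_insert_le (0 : ℕ) (S.erase 0)
  have hmul : m * SC.card ≤ m * ℓ := Nat.mul_le_mul_left m hSCcard
  have hcomm : ℓ * m = m * ℓ := Nat.mul_comm ℓ m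
  omega
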